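/- Let (M, ω) be a presymplectic finite-dimensional vector space with kernel K and a chosen complement W (M = W ⊕ K). Define Ω on M ⊕ K* by Ω((m,ρ),(m',ρ')) = ω(m,m') + ρ(k') − ρ'(k), where k, k' are the K-components of m, m'. Then Ω is a symplectic (antisymmetric, nondegenerate) bilinear form on M ⊕ K*, and its restriction to M ⊕ {0} equals ω. -/

import Mathlib

/-- Let `(M, ω)` be a presymplectic finite-dimensional real vector space with
kernel `K = LinearMap.ker ω` and a chosen complement `W` (so `M = W ⊕ K`).  Let
`π : M →ₗ K` be the projection onto `K` along `W`.  Define `Ω` on `M ⊕ K*` by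
`Ω((m,ρ),(m',ρ')) = ω(m,m') + ρ(π m') − ρ'(π m)`.  Then `Ω` is antisymmetric and
nondegenerate (symplectic) on `M ⊕ K*`, and its restriction to `M ⊕ {0}` equals `ω`. -/
theorem stmt3 (M : Type*) [AddCommGroup M] [Module ℝ M] [FiniteDimensional ℝ M]
    (ω : M →ₗ[ℝ] M →ₗ[ℝ] ℝ) (hanti : ∀ u v, ω u v = - ω v u)
    (W : Submodule ℝ M) (hcompl : IsCompl (LinearMap.ker ω) W) :
    let K := LinearMap.ker ω
    let π : M →ₗ[ℝ] K := K.linearProjOfIsCompl W hcompl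
    let Ω : (M × Module.Dual ℝ K) → (M × Module.Dual ℝ K) → ℝ :=
      fun p q => ω p.1 q.1 + p.2 (π q.1) - q.2 (π p.1)
    (∀ p q, Ω p q = - Ω q p) ∧
      (∀ p, (∀ q, Ω p q = 0) → p = 0) ∧
      (∀ m m' : M, Ω (m, 0) (m', 0) = ω m m') := by
  intro K π Ω
  refine ⟨fun p q => by simp only [Ω, hanti p.1 q.1]; ring, ?_, fun m m' => by simp [Ω]⟩
  rintro ⟨m, ρ⟩ h
  -- From q = (0, ρ') : π m = 0
  have hπm : π m = 0 := by
    rw [← Module.forall_dual_apply_eq_zero_iff ℝ]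
    intro φ
    have := h (0, φ)
    simpa [Ω] using this
  have hmW : m ∈ W := (Submodule.linearProjOfIsCompl_apply_eq_zero_iff hcompl).mp hπm
  -- From q = (m', 0) : ω m m' + ρ (π m') = 0
  have key : ∀ m' : M, ω m m' + ρ (π m') = 0 := by
    intro m'
    have := h (m', 0)
    simpa [Ω, hπm] using this
  -- ω m vanishes
  have hωm : ∀ m' : M, ω m m' = 0 := by
    intro m'
    have hdecomp : (K.linearProjOfIsCompl W hcompl m' : M) + (W.linearProjOfIsCompl K hcompl.symm m' : M) = m' := Submodule.projection_add_projection_eq_self hcompl m'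
    set k' := (K.linearProjOfIsCompl W hcompl m' : M)
    set w' := (W.linearProjOfIsCompl K hcompl.symm m' : M)
    have hω_w : ω m w' = 0 := by
      have := key w'
      rwa [show π w' = 0 from Submodule.projectionOnto_apply_right hcompl (W.linearProjOfIsCompl K hcompl.symm m'), map_zero, add_zero] at this
    have hω_k : ω m k' = 0 := by
      rw [hanti]
      have : ω k' = 0 := (K.linearProjOfIsCompl W hcompl m').2
      simp [this]
    calc ω m m' = ω m (k' + w') := by rw [hdecomp]
      _ = 0 := by rw [map_add, hω_w, hω_k, add_zero]
  have hmK : m ∈ K := by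
    simp only [K, LinearMap.mem_ker]
    exact LinearMap.ext hωm
  have hm0 : m = 0 := by
    have := hcompl.inf_eq_bot
    have hmem : m ∈ K ⊓ W := ⟨hmK, hmW⟩
    rw [this] at hmem
    exact hmem
  -- ρ = 0 : π is surjective onto K
  have hρ : ρ = 0 := by
    ext k
    have := key k
    rw [hm0] at this
    simpa [show π (k : M) = k from Submodule.projectionOnto_apply_left hcompl k] using this
  simp [hm0, hρ]
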